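/- arXiv:2305.13958 — 2 statements merged into one kernel-verified Lean document; each statement's English description precedes it below -/
import Mathlib

section
/- Let n = 2m ≥ 2 be even and let A_n be the n×n upper-shift matrix over ℂ. Define h = ∑_{i=1}^n (−1)^{i+1} E_{ii}, and for 1 ≤ k ≤ m−1 define e_k = ∑_{l=1}^{m−k} (E_{2l−1, 2k+2l−1} − E_{2k+2l, 2l}). Then the solution set {X ∈ M_n(ℂ) | Xᵀ A_n + A_n X = 0} equals the ℂ-linear span of {h, e_1, …, e_{m−1}}. -/
open Matrix

def shiftMat (n : ℕ) : Matrix (Fin n) (Fin n) ℂ :=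
  Matrix.of fun i j => if (j : ℕ) = (i : ℕ) + 1 then 1 else 0

noncomputable def hMat (n : ℕ) : Matrix (Fin n) (Fin n) ℂ :=
  ∑ i : Fin n, ((-1 : ℂ)) ^ (i : ℕ) • Matrix.single i i 1

lemma stdBasisMatrix_apply' {n : ℕ} (i j i' j' : Fin n) (c : ℂ) :
    Matrix.single i j c i' j' = if i = i' ∧ j = j' then c else 0 := rfl

lemma hMat_apply (n : ℕ) (i j : Fin n) :
    hMat n i j = if i = j then (-1 : ℂ) ^ (i : ℕ) else 0 := by
  rw [hMat, Matrix.sum_apply]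
  simp only [Matrix.smul_apply, stdBasisMatrix_apply', smul_ite, smul_eq_mul, mul_one,
    smul_zero]
  rw [Finset.sum_eq_single i]
  · by_cases h : i = j
    · subst h; simp
    · rw [if_neg (by tauto), if_neg h, mul_zero]
  · intro b _ hb
    rw [if_neg (by rintro ⟨rfl, rfl⟩; exact hb rfl), mul_zero]
  · simp

lemma transpose_mul_shift_apply (n : ℕ) (X : Matrix (Fin n) (Fin n) ℂ) (i j : Fin n) :
    (Xᵀ * shiftMat n) i j = if h : 1 ≤ (j : ℕ) then X ⟨(j : ℕ) - 1, by omega⟩ i else 0 := by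
  rw [Matrix.mul_apply]
  split
  · next h =>
    rw [Finset.sum_eq_single (⟨(j : ℕ) - 1, by omega⟩ : Fin n)]
    · simp only [Matrix.transpose_apply, shiftMat, Matrix.of_apply, Fin.val_mk]
      rw [if_pos (by omega), mul_one]
    · intro b _ hb
      simp only [Matrix.transpose_apply, shiftMat, Matrix.of_apply]
      rw [if_neg (by
        intro hc
        exact hb (by rw [Fin.eq_mk_iff_val_eq]; omega)), mul_zero]
    · simp
  · next h =>
    apply Finset.sum_eq_zero
    intro b _
    simp only [Matrix.transpose_apply, shiftMat, Matrix.of_apply]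
    rw [if_neg (by omega), mul_zero]

lemma shift_mul_apply (n : ℕ) (X : Matrix (Fin n) (Fin n) ℂ) (i j : Fin n) :
    (shiftMat n * X) i j = if h : (i : ℕ) + 1 < n then X ⟨(i : ℕ) + 1, h⟩ j else 0 := by
  rw [Matrix.mul_apply]
  split
  · next h =>
    rw [Finset.sum_eq_single (⟨(i : ℕ) + 1, h⟩ : Fin n)]
    · simp [shiftMat]
    · intro b _ hb
      simp only [shiftMat, Matrix.of_apply]
      rw [if_neg (by
        intro hc
        exact hb (by rw [Fin.eq_mk_iff_val_eq]; omega)), zero_mul]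
    · simp
  · next h =>
    apply Finset.sum_eq_zero
    intro b _
    simp only [shiftMat, Matrix.of_apply]
    rw [if_neg (by omega), zero_mul]
section
variable {n : ℕ} {X : Matrix (Fin n) (Fin n) ℂ}

lemma solR1 (hX : Xᵀ * shiftMat n + shiftMat n * X = 0)
    (a b : ℕ) (ha : a + 2 ≤ n) (hb : b + 2 ≤ n) :
    X ⟨a + 1, by omega⟩ ⟨b + 1, by omega⟩ = -X ⟨b, by omega⟩ ⟨a, by omega⟩ := by
  have h0 := congrFun (congrFun hX ⟨a, by omega⟩) ⟨b + 1, by omega⟩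
  rw [Matrix.add_apply, transpose_mul_shift_apply, shift_mul_apply, Matrix.zero_apply] at h0
  rw [dif_pos (by simp), dif_pos (by simp; omega)] at h0
  simp only [Fin.val_mk, Nat.add_sub_cancel] at h0
  linear_combination h0

lemma solR2 (hX : Xᵀ * shiftMat n + shiftMat n * X = 0)
    (a : ℕ) (ha : a + 2 ≤ n) :
    X ⟨a + 1, by omega⟩ ⟨0, by omega⟩ = 0 := by
  have h0 := congrFun (congrFun hX ⟨a, by omega⟩) ⟨0, by omega⟩
  rw [Matrix.add_apply, transpose_mul_shift_apply, shift_mul_apply, Matrix.zero_apply] at h0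
  rw [dif_neg (by simp), dif_pos (by simp; omega)] at h0
  simp only [Fin.val_mk] at h0
  linear_combination h0

lemma solR3 (hX : Xᵀ * shiftMat n + shiftMat n * X = 0)
    (b : ℕ) (hb : b + 2 ≤ n) :
    X ⟨b, by omega⟩ ⟨n - 1, by omega⟩ = 0 := by
  have h0 := congrFun (congrFun hX ⟨n - 1, by omega⟩) ⟨b + 1, by omega⟩
  rw [Matrix.add_apply, transpose_mul_shift_apply, shift_mul_apply, Matrix.zero_apply] at h0
  rw [dif_pos (by simp), dif_neg (by simp; omega)] at h0
  simp only [Fin.val_mk, Nat.add_sub_cancel] at h0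
  linear_combination h0

lemma sol_of
    (h1 : ∀ (a b : ℕ) (ha : a + 2 ≤ n) (hb : b + 2 ≤ n),
      X ⟨a + 1, by omega⟩ ⟨b + 1, by omega⟩ = -X ⟨b, by omega⟩ ⟨a, by omega⟩)
    (h2 : ∀ (a : ℕ) (ha : a + 2 ≤ n), X ⟨a + 1, by omega⟩ ⟨0, by omega⟩ = 0)
    (h3 : ∀ (b : ℕ) (hb : b + 2 ≤ n), X ⟨b, by omega⟩ ⟨n - 1, by omega⟩ = 0) :
    Xᵀ * shiftMat n + shiftMat n * X = 0 := by
  ext i j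
  rw [Matrix.add_apply, transpose_mul_shift_apply, shift_mul_apply, Matrix.zero_apply]
  split_ifs with hj hi hi
  · -- 1 ≤ j, i+1 < n
    have := h1 i.1 (j.1 - 1) (by omega) (by omega)
    simp only [show (j : ℕ) - 1 + 1 = (j : ℕ) from by omega, Fin.eta] at this
    linear_combination this
  · -- 1 ≤ j, i+1 ≥ n, so i = n-1
    have := h3 (j.1 - 1) (by omega)
    have hi' : i = ⟨n - 1, by omega⟩ := Fin.ext (by simp; omega)
    rw [hi', this, add_zero]
  · -- j = 0
    have := h2 i.1 (by omega)
    have hj' : j = ⟨0, by omega⟩ := Fin.ext (by simp; omega)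
    rw [hj', this, zero_add]
  · rw [add_zero]
end
section
variable {n : ℕ} {X : Matrix (Fin n) (Fin n) ℂ}

lemma solStep (hX : Xᵀ * shiftMat n + shiftMat n * X = 0)
    (a b : ℕ) (ha : a + 3 ≤ n) (hb : b + 3 ≤ n) :
    X ⟨a + 2, by omega⟩ ⟨b + 2, by omega⟩ = X ⟨a, by omega⟩ ⟨b, by omega⟩ := by
  have h1 := solR1 hX (a + 1) (b + 1) (by omega) (by omega)
  have h2 := solR1 hX b a (by omega) (by omega)
  simp only [show a + 1 + 1 = a + 2 from rfl, show b + 1 + 1 = b + 2 from rfl] at h1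
  rw [h1, h2, neg_neg]

lemma solDiag (hX : Xᵀ * shiftMat n + shiftMat n * X = 0) :
    ∀ (t a b : ℕ) (h1 : a + 2 * t < n) (h2 : b + 2 * t < n),
      X ⟨a + 2 * t, h1⟩ ⟨b + 2 * t, h2⟩ = X ⟨a, by omega⟩ ⟨b, by omega⟩ := by
  intro t
  induction t with
  | zero => intro a b h1 h2; simp
  | succ t ih =>
    intro a b h1 h2
    have e1 : (⟨a + 2 * (t + 1), h1⟩ : Fin n) = ⟨a + 2 * t + 2, by omega⟩ := Fin.ext (by simp; ring)
    have e2 : (⟨b + 2 * (t + 1), h2⟩ : Fin n) = ⟨b + 2 * t + 2, by omega⟩ := Fin.ext (by simp; ring)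
    rw [e1, e2, solStep hX (a + 2 * t) (b + 2 * t) (by omega) (by omega),
      ih a b (by omega) (by omega)]
end

section
variable {m : ℕ} {X : Matrix (Fin (2 * m)) (Fin (2 * m)) ℂ}

lemma row0_odd (hX : Xᵀ * shiftMat (2 * m) + shiftMat (2 * m) * X = 0)
    (d : ℕ) (hd : d < 2 * m) (hodd : d % 2 = 1) :
    X ⟨0, by omega⟩ ⟨d, by omega⟩ = 0 := by
  have h := solDiag hX ((2 * m - 1 - d) / 2) 0 d (by omega) (by omega)
  rw [← h]
  have h3 := solR3 hX (2 * m - 1 - d) (by omega)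
  have e1 : (⟨0 + 2 * ((2 * m - 1 - d) / 2), by omega⟩ : Fin (2 * m)) =
      ⟨2 * m - 1 - d, by omega⟩ := Fin.ext (by simp; omega)
  have e2 : (⟨d + 2 * ((2 * m - 1 - d) / 2), by omega⟩ : Fin (2 * m)) =
      ⟨2 * m - 1, by omega⟩ := Fin.ext (by simp; omega)
  rw [e1, e2]
  exact h3

lemma sol_entries (hX : Xᵀ * shiftMat (2 * m) + shiftMat (2 * m) * X = 0) :
    ∀ (a b : ℕ) (ha : a < 2 * m) (hb : b < 2 * m),
      X ⟨a, ha⟩ ⟨b, hb⟩ =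
        if a % 2 = 0 ∧ a ≤ b ∧ (b - a) % 2 = 0 then X ⟨0, by omega⟩ ⟨b - a, by omega⟩
        else if a % 2 = 1 ∧ b ≤ a ∧ (a - b) % 2 = 0 then -X ⟨0, by omega⟩ ⟨a - b, by omega⟩
        else 0 := by
  intro a
  induction a using Nat.strong_induction_on with
  | _ a ih =>
    intro b ha hb
    match a, ha, ih with
    | 0, ha, ih =>
      by_cases hb2 : b % 2 = 0
      · rw [if_pos ⟨by omega, by omega, by omega⟩]
        congr 1
      · rw [if_neg (by omega), if_neg (by omega)]
        exact row0_odd hX b hb (by omega)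
    | 1, ha, ih =>
      match b, hb with
      | 0, hb =>
        rw [if_neg (by omega), if_neg (by omega)]
        exact solR2 hX 0 (by omega)
      | (c+1), hb =>
        have h1 := solR1 hX 0 c (by omega) (by omega)
        rw [h1]
        match c, hb with
        | 0, hb =>
          rw [if_neg (by omega), if_pos ⟨by omega, by omega, by omega⟩]
        | (c+1), hb =>
          have h2 := solR2 hX c (by omega)
          rw [h2, neg_zero, if_neg (by omega), if_neg (by omega)]
    | (a+2), ha, ih =>
      match b, hb with
      | 0, hb =>
        rw [if_neg (by omega), if_neg (by omega)]
        exact solR2 hX (a + 1) (by omega)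
      | 1, hb =>
        have h1 := solR1 hX (a + 1) 0 (by omega) (by omega)
        simp only [show a + 1 + 1 = a + 2 from rfl] at h1
        rw [h1]
        by_cases hp : (a + 1) % 2 = 0
        · rw [if_neg (by omega), if_pos ⟨by omega, by omega, by omega⟩]
          congr 1
        · rw [row0_odd hX (a + 1) (by omega) (by omega), neg_zero,
            if_neg (by omega), if_neg (by omega)]
      | (b+2), hb =>
        rw [solStep hX a b (by omega) (by omega), ih a (by omega) b (by omega) (by omega)]
        have hc1 : ((a+2) % 2 = 0 ∧ a+2 ≤ b+2 ∧ (b+2-(a+2)) % 2 = 0) ↔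
            (a % 2 = 0 ∧ a ≤ b ∧ (b - a) % 2 = 0) := by omega
        have hc2 : ((a+2) % 2 = 1 ∧ b+2 ≤ a+2 ∧ (a+2-(b+2)) % 2 = 0) ↔
            (a % 2 = 1 ∧ b ≤ a ∧ (a - b) % 2 = 0) := by omega
        simp only [show b+2-(a+2) = b - a from by omega,
          show a+2-(b+2) = a - b from by omega]
        split_ifs <;> first | rfl | (exfalso; omega)
end
noncomputable def eMatEven (m k : ℕ) : Matrix (Fin (2 * m)) (Fin (2 * m)) ℂ :=
  if h : 1 ≤ k ∧ k + 1 ≤ m then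
    ∑ l : Fin (m - k),
      (Matrix.single
          (⟨2 * l.1, by have := l.2; omega⟩ : Fin (2 * m))
          (⟨2 * k + 2 * l.1, by have := l.2; omega⟩ : Fin (2 * m)) 1 -
        Matrix.single
          (⟨2 * k + 2 * l.1 + 1, by have := l.2; omega⟩ : Fin (2 * m))
          (⟨2 * l.1 + 1, by have := l.2; omega⟩ : Fin (2 * m)) 1)
  else 0

lemma eMatEven_apply (m k : ℕ) (hk1 : 1 ≤ k) (hk2 : k + 1 ≤ m) (i j : Fin (2 * m)) :
    eMatEven m k i j =
      if (i : ℕ) % 2 = 0 ∧ (j : ℕ) = (i : ℕ) + 2 * k then 1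
      else if (j : ℕ) % 2 = 1 ∧ (i : ℕ) = (j : ℕ) + 2 * k then -1 else 0 := by
  have hi := i.isLt
  have hj := j.isLt
  rw [eMatEven, dif_pos ⟨hk1, hk2⟩, Matrix.sum_apply]
  simp only [Matrix.sub_apply, stdBasisMatrix_apply', Fin.ext_iff, Fin.val_mk]
  by_cases c1 : (i : ℕ) % 2 = 0 ∧ (j : ℕ) = (i : ℕ) + 2 * k
  · rw [if_pos c1]
    rw [Finset.sum_eq_single (⟨(i : ℕ) / 2, by omega⟩ : Fin (m - k))]
    · rw [if_pos ⟨by simp; omega, by simp; omega⟩, if_neg (by simp; omega)]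
      norm_num
    · intro l _ hl
      have hl' : l.1 ≠ (i : ℕ) / 2 := fun h => hl (Fin.ext (by simp [h]))
      rw [if_neg (by omega), if_neg (by omega)]
      norm_num
    · simp
  · rw [if_neg c1]
    by_cases c2 : (j : ℕ) % 2 = 1 ∧ (i : ℕ) = (j : ℕ) + 2 * k
    · rw [if_pos c2]
      rw [Finset.sum_eq_single (⟨((j : ℕ) - 1) / 2, by omega⟩ : Fin (m - k))]
      · rw [if_neg (by simp; omega), if_pos ⟨by simp; omega, by simp; omega⟩]
        norm_num
      · intro l _ hl
        have hl' : l.1 ≠ ((j : ℕ) - 1) / 2 := fun h => hl (Fin.ext (by simp [h]))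
        rw [if_neg (by omega), if_neg (by omega)]
        norm_num
      · simp
    · rw [if_neg c2]
      apply Finset.sum_eq_zero
      intro l _
      rw [if_neg (by omega), if_neg (by omega)]
      norm_num

lemma hMat_sol (n : ℕ) : (hMat n)ᵀ * shiftMat n + shiftMat n * hMat n = 0 := by
  apply sol_of
  · intro a b ha hb
    rw [hMat_apply, hMat_apply]
    by_cases hab : a = b
    · subst hab
      rw [if_pos rfl, if_pos rfl]
      simp only [Fin.val_mk]
      rw [pow_succ]
      ring
    · rw [if_neg (by simp [Fin.ext_iff]; omega), if_neg (by simp [Fin.ext_iff]; omega), neg_zero]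
  · intro a ha
    rw [hMat_apply, if_neg (by simp [Fin.ext_iff])]
  · intro b hb
    rw [hMat_apply, if_neg (by simp [Fin.ext_iff]; omega)]
lemma eMat_sol (m k : ℕ) (hk1 : 1 ≤ k) (hk2 : k + 1 ≤ m) :
    (eMatEven m k)ᵀ * shiftMat (2 * m) + shiftMat (2 * m) * eMatEven m k = 0 := by
  apply sol_of
  · intro a b ha hb
    rw [eMatEven_apply m k hk1 hk2, eMatEven_apply m k hk1 hk2]
    simp only [Fin.val_mk]
    split_ifs <;> first | (exfalso; omega) | tauto | norm_num
  · intro a ha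
    rw [eMatEven_apply m k hk1 hk2]
    simp only [Fin.val_mk]
    split_ifs <;> first | (exfalso; omega) | tauto | norm_num
  · intro b hb
    rw [eMatEven_apply m k hk1 hk2]
    simp only [Fin.val_mk]
    split_ifs <;> first | (exfalso; omega) | tauto | norm_num

noncomputable def solSpace (n : ℕ) : Submodule ℂ (Matrix (Fin n) (Fin n) ℂ) where
  carrier := {X | Xᵀ * shiftMat n + shiftMat n * X = 0}
  zero_mem' := by simp
  add_mem' := by
    intro a b ha hb
    simp only [Set.mem_setOf_eq] at ha hb ⊢
    rw [Matrix.transpose_add, add_mul, mul_add,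
      show aᵀ * shiftMat n + bᵀ * shiftMat n + (shiftMat n * a + shiftMat n * b)
        = (aᵀ * shiftMat n + shiftMat n * a) + (bᵀ * shiftMat n + shiftMat n * b) from by abel,
      ha, hb, add_zero]
  smul_mem' := by
    intro c X hX
    simp only [Set.mem_setOf_eq] at hX ⊢
    rw [Matrix.transpose_smul, Matrix.smul_mul, Matrix.mul_smul, ← smul_add, hX, smul_zero]
/-- For even `n = 2m ≥ 2`, the solution space of `Xᵀ A_n + A_n X = 0`
is the linear span of `h, e_1, …, e_{m-1}`. -/
theorem stmt_12 (m : ℕ) (hm : 1 ≤ m) :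
    {X : Matrix (Fin (2 * m)) (Fin (2 * m)) ℂ |
        Xᵀ * shiftMat (2 * m) + shiftMat (2 * m) * X = 0} =
      ↑(Submodule.span ℂ
        (insert (hMat (2 * m)) {M | ∃ kk, 1 ≤ kk ∧ kk + 1 ≤ m ∧ M = eMatEven m kk})) := by
  apply Set.eq_of_subset_of_subset
  · intro X hX
    have hX' : Xᵀ * shiftMat (2 * m) + shiftMat (2 * m) * X = 0 := hX
    set c : ℕ → ℂ := fun d => if h : d < 2 * m then X ⟨0, by omega⟩ ⟨d, h⟩ else 0 with hc
    have key : X = c 0 • hMat (2 * m)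
        + ∑ k ∈ Finset.Icc 1 (m - 1), c (2 * k) • eMatEven m k := by
      have hcval : ∀ (d : ℕ) (hd : d < 2 * m), c d = X ⟨0, by omega⟩ ⟨d, hd⟩ := by
        intro d hd
        simp only [hc]
        rw [dif_pos hd]
      ext i j
      have hi := i.isLt
      have hj := j.isLt
      rw [Matrix.add_apply, Matrix.sum_apply, Matrix.smul_apply, hMat_apply, smul_eq_mul]
      have hsum : ∀ k ∈ Finset.Icc 1 (m - 1), (c (2 * k) • eMatEven m k) i j
          = c (2 * k) * (if (i : ℕ) % 2 = 0 ∧ (j : ℕ) = (i : ℕ) + 2 * k then 1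
              else if (j : ℕ) % 2 = 1 ∧ (i : ℕ) = (j : ℕ) + 2 * k then -1 else 0) := by
        intro k hk
        rw [Finset.mem_Icc] at hk
        rw [Matrix.smul_apply, eMatEven_apply m k hk.1 (by omega), smul_eq_mul]
      rw [Finset.sum_congr rfl hsum]
      rw [show X i j = X ⟨(i : ℕ), hi⟩ ⟨(j : ℕ), hj⟩ from by rw [Fin.eta, Fin.eta]]
      rw [sol_entries hX' (i : ℕ) (j : ℕ) hi hj]
      by_cases cA : (i : ℕ) % 2 = 0 ∧ (i : ℕ) ≤ (j : ℕ) ∧ ((j : ℕ) - (i : ℕ)) % 2 = 0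
      · rw [if_pos cA]
        rcases eq_or_lt_of_le cA.2.1 with heq | hlt
        · -- diagonal, i even
          have hij : i = j := Fin.ext heq
          rw [if_pos hij,
            Finset.sum_eq_zero (fun k hk => by
              rw [Finset.mem_Icc] at hk
              rw [if_neg (by omega), if_neg (by omega), mul_zero]),
            add_zero, hcval 0 (by omega), (Nat.even_iff.mpr cA.1).neg_one_pow, mul_one]
          congr 1
          exact Fin.ext (by simp; omega)
        · -- i < j, i even
          rw [if_neg (Fin.ne_of_val_ne (by omega))]
          rw [Finset.sum_eq_single_of_mem (((j : ℕ) - (i : ℕ)) / 2)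
            (Finset.mem_Icc.mpr ⟨by omega, by omega⟩)
            (fun k hk hne => by
              rw [Finset.mem_Icc] at hk
              rw [if_neg (by omega), if_neg (by omega), mul_zero])]
          rw [if_pos ⟨cA.1, by omega⟩, mul_one, mul_zero, zero_add,
            hcval (2 * (((j : ℕ) - (i : ℕ)) / 2)) (by omega)]
          congr 1
          exact Fin.ext (by simp; omega)
      · rw [if_neg cA]
        by_cases cB : (i : ℕ) % 2 = 1 ∧ (j : ℕ) ≤ (i : ℕ) ∧ ((i : ℕ) - (j : ℕ)) % 2 = 0
        · rw [if_pos cB]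
          rcases eq_or_lt_of_le cB.2.1 with heq | hlt
          · -- diagonal, i odd
            have hij : i = j := Fin.ext heq.symm
            rw [if_pos hij,
              Finset.sum_eq_zero (fun k hk => by
                rw [Finset.mem_Icc] at hk
                rw [if_neg (by omega), if_neg (by omega), mul_zero]),
              add_zero, hcval 0 (by omega), (Nat.odd_iff.mpr cB.1).neg_one_pow]
            simp only [mul_neg_one, neg_inj]
            congr 1
            exact Fin.ext (by simp; omega)
          · -- j < i, i odd
            rw [if_neg (Fin.ne_of_val_ne (by omega))]
            rw [Finset.sum_eq_single_of_mem (((i : ℕ) - (j : ℕ)) / 2)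
              (Finset.mem_Icc.mpr ⟨by omega, by omega⟩)
              (fun k hk hne => by
                rw [Finset.mem_Icc] at hk
                rw [if_neg (by omega), if_neg (by omega), mul_zero])]
            rw [if_neg (by omega), if_pos ⟨by omega, by omega⟩, mul_zero, zero_add,
              hcval (2 * (((i : ℕ) - (j : ℕ)) / 2)) (by omega)]
            rw [show X ⟨0, by omega⟩ ⟨2 * (((i : ℕ) - (j : ℕ)) / 2), by omega⟩
              = X ⟨0, by omega⟩ ⟨(i : ℕ) - (j : ℕ), by omega⟩ from by
                congr 1; exact Fin.ext (by simp; omega)]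
            ring
        · rw [if_neg cB]
          rw [if_neg (fun hij => by
              have := congrArg Fin.val hij
              omega),
            Finset.sum_eq_zero (fun k hk => by
              rw [Finset.mem_Icc] at hk
              rw [if_neg (by omega), if_neg (by omega), mul_zero]),
            add_zero, mul_zero]

    rw [key]
    apply Submodule.add_mem
    · exact Submodule.smul_mem _ _ (Submodule.subset_span (Set.mem_insert _ _))
    · apply Submodule.sum_mem
      intro k hk
      rw [Finset.mem_Icc] at hk
      exact Submodule.smul_mem _ _ (Submodule.subset_span
        (Set.mem_insert_of_mem _ ⟨k, hk.1, by omega, rfl⟩))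
  · have hle : Submodule.span ℂ
        (insert (hMat (2 * m)) {M | ∃ kk, 1 ≤ kk ∧ kk + 1 ≤ m ∧ M = eMatEven m kk})
        ≤ solSpace (2 * m) := by
      rw [Submodule.span_le]
      rintro M (rfl | ⟨kk, hkk1, hkk2, rfl⟩)
      · exact hMat_sol (2 * m)
      · exact eMat_sol m kk hkk1 hkk2
    intro X hX
    exact hle hX
end

section
/- Let n ≥ 5 be odd (so n ≡ 1 or 3 mod 4) and let A_n² be the square of the n×n upper-shift matrix. Then the Lie algebra sol_{A_n²} = {X ∈ M_n(ℂ) | Xᵀ A_n² + A_n² X = 0}, viewed as a Lie subalgebra of gl_n(ℂ) with bracket [X,Y] = XY − YX, is solvable. -/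
open Matrix

attribute [local instance 100] LieRing.ofAssociativeRing

/-- The Lie algebra `sol_A = {X | Xᵀ A + A X = 0}`, viewed as a Lie subalgebra of the
matrix Lie algebra `gl_n(ℂ)` with bracket `[X, Y] = XY - YX`. -/
def solAlg (n : ℕ) (A : Matrix (Fin n) (Fin n) ℂ) :
    LieSubalgebra ℂ (Matrix (Fin n) (Fin n) ℂ) where
  carrier := {X | Xᵀ * A + A * X = 0}
  add_mem' := by
    intro a b ha hb
    simp only [Set.mem_setOf_eq] at ha hb ⊢
    have key : (a + b)ᵀ * A + A * (a + b) = (aᵀ * A + A * a) + (bᵀ * A + A * b) := by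
      rw [Matrix.transpose_add]; noncomm_ring
    rw [key, ha, hb, add_zero]
  zero_mem' := by simp
  smul_mem' := by
    intro c x hx
    simp only [Set.mem_setOf_eq] at hx ⊢
    rw [Matrix.transpose_smul, Matrix.smul_mul, Matrix.mul_smul, ← smul_add, hx, smul_zero]
  lie_mem' := by
    intro x y hx hy
    simp only [Set.mem_setOf_eq] at hx hy ⊢
    rw [Ring.lie_def]
    have key : (x * y - y * x)ᵀ * A + A * (x * y - y * x) =
        yᵀ * (xᵀ * A + A * x) + (xᵀ * A + A * x) * y -
          xᵀ * (yᵀ * A + A * y) - (yᵀ * A + A * y) * x := by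
      rw [Matrix.transpose_sub, Matrix.transpose_mul, Matrix.transpose_mul]; noncomm_ring
    rw [key, hx, hy]
    simp

/-! ### Auxiliary machinery for the solvability proof -/

section AuxEntries

lemma shiftMat_sq_apply (n : ℕ) (i j : Fin n) :
    (shiftMat n ^ 2) i j = if (j : ℕ) = (i : ℕ) + 2 then 1 else 0 := by
  rw [sq, Matrix.mul_apply]
  simp only [shiftMat, Matrix.of_apply]
  by_cases hj : (j : ℕ) = (i : ℕ) + 2
  · have hi1 : (i : ℕ) + 1 < n := by omega
    rw [Finset.sum_eq_single (⟨(i : ℕ) + 1, hi1⟩ : Fin n)]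
    · simp [hj]
    · intro k _ hk
      have : (k : ℕ) ≠ (i : ℕ) + 1 := fun h => hk (Fin.ext h)
      simp [this]
    · simp
  · rw [if_neg hj]
    apply Finset.sum_eq_zero
    intro k _
    by_cases h1 : (k : ℕ) = (i : ℕ) + 1
    · have : (j : ℕ) ≠ (k : ℕ) + 1 := by omega
      simp [this]
    · simp [h1]

/-- Entries of `X` extended by zero outside the square. -/
def xe {n : ℕ} (X : Matrix (Fin n) (Fin n) ℂ) (a b : ℕ) : ℂ :=
  if h : a < n ∧ b < n then X ⟨a, h.1⟩ ⟨b, h.2⟩ else 0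

lemma xe_eq {n : ℕ} (X : Matrix (Fin n) (Fin n) ℂ) (i j : Fin n) :
    xe X i j = X i j := by
  simp [xe, Fin.is_lt]

lemma xe_zero {n : ℕ} (X : Matrix (Fin n) (Fin n) ℂ) {a b : ℕ} (h : n ≤ a ∨ n ≤ b) :
    xe X a b = 0 := by
  unfold xe
  rw [dif_neg]
  omega

lemma solE {n : ℕ} {X : Matrix (Fin n) (Fin n) ℂ}
    (hX : Xᵀ * (shiftMat n ^ 2) + (shiftMat n ^ 2) * X = 0)
    (a b : ℕ) (ha : a < n) (hb : b < n) :
    (if 2 ≤ b then xe X (b - 2) a else 0) + xe X (a + 2) b = 0 := by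
  have h := congrFun (congrFun hX ⟨a, ha⟩) ⟨b, hb⟩
  rw [Matrix.add_apply, Matrix.mul_apply, Matrix.mul_apply, Matrix.zero_apply] at h
  have e1 : ∑ k, Xᵀ ⟨a, ha⟩ k * (shiftMat n ^ 2) k ⟨b, hb⟩
      = (if 2 ≤ b then xe X (b - 2) a else 0) := by
    by_cases h2 : 2 ≤ b
    · have hb2 : b - 2 < n := by omega
      rw [if_pos h2, Finset.sum_eq_single (⟨b - 2, hb2⟩ : Fin n)]
      · rw [shiftMat_sq_apply]
        simp only [Matrix.transpose_apply]
        rw [if_pos (by omega), xe]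
        rw [dif_pos ⟨hb2, ha⟩, mul_one]
      · intro k _ hk
        rw [shiftMat_sq_apply, if_neg, mul_zero]
        intro hc
        exact hk (Fin.ext (by simp at hc ⊢; omega))
      · simp
    · rw [if_neg h2]
      apply Finset.sum_eq_zero
      intro k _
      rw [shiftMat_sq_apply, if_neg (by simp; omega), mul_zero]
  have e2 : ∑ k, (shiftMat n ^ 2) ⟨a, ha⟩ k * X k ⟨b, hb⟩ = xe X (a + 2) b := by
    by_cases h2 : a + 2 < n
    · rw [Finset.sum_eq_single (⟨a + 2, h2⟩ : Fin n)]
      · rw [shiftMat_sq_apply, if_pos (by simp), one_mul, xe, dif_pos ⟨h2, hb⟩]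
      · intro k _ hk
        rw [shiftMat_sq_apply, if_neg, zero_mul]
        intro hc
        exact hk (Fin.ext (by simp at hc ⊢; omega))
      · simp
    · rw [xe_zero X (Or.inl (by omega))]
      apply Finset.sum_eq_zero
      intro k _
      rw [shiftMat_sq_apply, if_neg (by simp; omega), zero_mul]
  rw [e1, e2] at h
  exact h

variable {n : ℕ} {X : Matrix (Fin n) (Fin n) ℂ}
variable (hX : Xᵀ * (shiftMat n ^ 2) + (shiftMat n ^ 2) * X = 0)
include hX

lemma eR1 {a b : ℕ} (ha2 : 2 ≤ a) (hb1 : b ≤ 1) (hb : b < n) : xe X a b = 0 := by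
  rcases lt_or_ge a n with han | han
  · have h := solE hX (a - 2) b (by omega) hb
    rw [if_neg (by omega)] at h
    have : a - 2 + 2 = a := by omega
    rw [this, zero_add] at h
    exact h
  · exact xe_zero X (Or.inl han)

lemma eR2 {a b : ℕ} (ha : a + 3 ≤ n) (hb2 : n ≤ b + 2) (hb : b < n) : xe X a b = 0 := by
  have h := solE hX b (a + 2) hb (by omega)
  rw [if_pos (by omega : 2 ≤ a + 2)] at h
  rw [show a + 2 - 2 = a from by omega] at h
  rw [xe_zero X (a := b + 2) (b := a + 2) (Or.inl hb2), add_zero] at h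
  exact h

lemma eR3 {a b : ℕ} (ha2 : 2 ≤ a) (hb2 : 2 ≤ b) (han : a < n) (hbn : b < n) :
    xe X a b = - xe X (b - 2) (a - 2) := by
  have h := solE hX (a - 2) b (by omega) hbn
  rw [if_pos hb2] at h
  have : a - 2 + 2 = a := by omega
  rw [this] at h
  linear_combination h

end AuxEntries

/-- Certificate that the entry `(a, b)` is forced to vanish via a chain of relations going
down-left to the first two columns. -/
def pB (a b : ℕ) : Prop :=
  (b < a ∧ b / 2 % 2 = 0 ∧ 2 + 2 * (b / 2) ≤ a) ∨
  (a < b ∧ a / 2 % 2 = 1 ∧ 2 + 2 * (a / 2) ≤ b)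

/-- Certificate that the entry `(a, b)` is forced to vanish via a chain of relations going
up-right to the last two columns. -/
def pT (n a b : ℕ) : Prop :=
  (a < b ∧ (n - 1 - b) / 2 % 2 = 0 ∧ a + 2 * ((n - 1 - b) / 2) + 3 ≤ n) ∨
  (b < a ∧ (n - 1 - a) / 2 % 2 = 1 ∧ b + 2 * ((n - 1 - a) / 2) + 3 ≤ n)

section Chains

variable {n : ℕ} {X : Matrix (Fin n) (Fin n) ℂ}
variable (hX : Xᵀ * (shiftMat n ^ 2) + (shiftMat n ^ 2) * X = 0)
include hX

lemma zeroB : ∀ s a b, a + b ≤ s → pB a b → xe X a b = 0 := by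
  intro s
  induction s with
  | zero => intro a b hs hp; rcases hp with ⟨h, _⟩ | ⟨h, _⟩ <;> omega
  | succ s ih =>
    intro a b hs hp
    rcases le_or_gt n a with han | han
    · exact xe_zero X (Or.inl han)
    rcases le_or_gt n b with hbn | hbn
    · exact xe_zero X (Or.inr hbn)
    rcases le_or_gt b 1 with hb1 | hb1
    · have ha2 : 2 ≤ a := by rcases hp with ⟨h1, h2, h3⟩ | ⟨h1, h2, h3⟩ <;> omega
      exact eR1 hX ha2 hb1 hbn
    rcases le_or_gt a 1 with ha1 | ha1
    · exfalso; rcases hp with ⟨h1, h2, h3⟩ | ⟨h1, h2, h3⟩ <;> omega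
    · rw [eR3 hX (by omega) (by omega) han hbn, ih (b - 2) (a - 2) (by omega), neg_zero]
      rcases hp with ⟨h1, h2, h3⟩ | ⟨h1, h2, h3⟩
      · exact Or.inr ⟨by omega, by omega, by omega⟩
      · exact Or.inl ⟨by omega, by omega, by omega⟩

lemma zeroT : ∀ s a b, 2 * n ≤ a + b + s → a < n → b < n → pT n a b → xe X a b = 0 := by
  intro s
  induction s with
  | zero => intro a b hs ha hb _; omega
  | succ s ih =>
    intro a b hs han hbn hp
    rcases le_or_gt n (b + 2) with hb2 | hb2
    · have : a + 3 ≤ n := by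
        rcases hp with ⟨h1, h2, h3⟩ | ⟨h1, h2, h3⟩ <;> omega
      exact eR2 hX this hb2 hbn
    rcases le_or_gt n (a + 2) with ha2 | ha2
    · exfalso; rcases hp with ⟨h1, h2, h3⟩ | ⟨h1, h2, h3⟩ <;> omega
    · have key := eR3 hX (a := b + 2) (b := a + 2) (by omega) (by omega) hb2 ha2
      have e1 : a + 2 - 2 = a := by omega
      have e2 : b + 2 - 2 = b := by omega
      rw [e1, e2] at key
      have hz : xe X (b + 2) (a + 2) = 0 := by
        apply ih (b + 2) (a + 2) (by omega) hb2 ha2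
        rcases hp with ⟨h1, h2, h3⟩ | ⟨h1, h2, h3⟩
        · exact Or.inr ⟨by omega, by omega, by omega⟩
        · exact Or.inl ⟨by omega, by omega, by omega⟩
      rw [hz] at key
      linear_combination key

end Chains

/-- A weight function on indices witnessing simultaneous triangularizability. -/
def wt (n i : ℕ) : ℕ :=
  if n % 4 = 1 then
    (if i % 4 = 0 then i else if i % 4 = 1 then 2 * n + i
     else if i % 4 = 3 then 4 * n + (2 * n - i) else 6 * n + i)
  else
    (if i % 4 = 1 then i else if i % 4 = 0 then 2 * n + i
     else if i % 4 = 2 then 4 * n + (2 * n - i) else 6 * n + i)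

lemma wt_lt (n i : ℕ) (h : i < n) : wt n i < 7 * n := by
  unfold wt; split_ifs <;> omega

lemma wt_inj (n : ℕ) {a b : ℕ} (ha : a < n) (hb : b < n) (h : wt n a = wt n b) : a = b := by
  unfold wt at h; split_ifs at h <;> omega

set_option maxHeartbeats 2000000 in
lemma coverage {n a b : ℕ} (hn : 5 ≤ n) (ho : n % 2 = 1) (ha : a < n) (hb : b < n)
    (hw : wt n b < wt n a) : pB a b ∨ pT n a b := by
  obtain ⟨qn, hrn⟩ : ∃ q, (n = 4 * q + 1 ∨ n = 4 * q + 3) := ⟨n / 4, by omega⟩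
  obtain ⟨qa, ra, hra, rfl⟩ : ∃ q r, r < 4 ∧ a = 4 * q + r := ⟨a / 4, a % 4, by omega, by omega⟩
  obtain ⟨qb, rb, hrb, rfl⟩ : ∃ q r, r < 4 ∧ b = 4 * q + r := ⟨b / 4, b % 4, by omega, by omega⟩
  unfold wt at hw; unfold pB pT
  rcases hrn with rfl | rfl <;> interval_cases ra <;> interval_cases rb <;>
    simp only [Nat.mul_add_mod, Nat.reduceMod, Nat.reduceEqDiff, reduceIte] at hw <;> omega

/-- The space of matrices that are "triangular with a gap `d`" with respect to a weight. -/
noncomputable def lowN (n : ℕ) (W : Fin n → ℕ) (d : ℕ) :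
    Submodule ℂ (Matrix (Fin n) (Fin n) ℂ) where
  carrier := {X | ∀ i j, W j < W i + d → X i j = 0}
  add_mem' := by
    intro a b ha hb i j h
    rw [Matrix.add_apply, ha i j h, hb i j h, add_zero]
  zero_mem' := by intro i j _; rfl
  smul_mem' := by
    intro c X hX i j h
    rw [Matrix.smul_apply, hX i j h, smul_zero]

lemma mul_mem_lowN {n : ℕ} {W : Fin n → ℕ} {d e : ℕ}
    {X Y : Matrix (Fin n) (Fin n) ℂ} (hX : X ∈ lowN n W d) (hY : Y ∈ lowN n W e) :
    X * Y ∈ lowN n W (d + e) := by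
  intro i j h
  rw [Matrix.mul_apply]
  apply Finset.sum_eq_zero
  intro k _
  by_cases hk : W k < W i + d
  · rw [hX i k hk, zero_mul]
  · rw [hY k j (by omega), mul_zero]

lemma comm_mem_lowN {n : ℕ} {W : Fin n → ℕ} (hW : Function.Injective W)
    {X Y : Matrix (Fin n) (Fin n) ℂ} (hX : X ∈ lowN n W 0) (hY : Y ∈ lowN n W 0) :
    X * Y - Y * X ∈ lowN n W 1 := by
  intro i j h
  rcases lt_or_eq_of_le (Nat.lt_succ_iff.mp h) with hlt | heq
  · have h1 := mul_mem_lowN hX hY i j (by omega)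
    have h2 := mul_mem_lowN hY hX i j (by omega)
    rw [Matrix.sub_apply, h1, h2, sub_zero]
  · have hij : j = i := hW heq
    subst hij
    have key : ∀ (A B : Matrix (Fin n) (Fin n) ℂ), A ∈ lowN n W 0 → B ∈ lowN n W 0 →
        (A * B) j j = A j j * B j j := by
      intro A B hA hB
      rw [Matrix.mul_apply]
      rw [Finset.sum_eq_single j]
      · intro k _ hk
        by_cases hk2 : W k < W j
        · rw [hA j k (by omega), zero_mul]
        · have : W j < W k := by
            rcases Nat.lt_or_ge (W j) (W k) with h1 | h1
            · exact h1
            · exact absurd (hW (Nat.le_antisymm h1 (Nat.le_of_not_lt hk2))) hk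
          rw [hB k j (by omega), mul_zero]
      · intro hj; exact absurd (Finset.mem_univ j) hj
    rw [Matrix.sub_apply, key X Y hX hY, key Y X hY hX, mul_comm, sub_self]

lemma derived_bracket_bound {n : ℕ} {W : Fin n → ℕ}
    {L : LieSubalgebra ℂ (Matrix (Fin n) (Fin n) ℂ)} (I J : LieIdeal ℂ ↥L) {d e f : ℕ}
    (hI : ∀ x : ↥L, x ∈ I → (x : Matrix (Fin n) (Fin n) ℂ) ∈ lowN n W d)
    (hJ : ∀ x : ↥L, x ∈ J → (x : Matrix (Fin n) (Fin n) ℂ) ∈ lowN n W e)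
    (hf : ∀ X Y : Matrix (Fin n) (Fin n) ℂ, X ∈ lowN n W d → Y ∈ lowN n W e →
      X * Y - Y * X ∈ lowN n W f) :
    ∀ x : ↥L, x ∈ ⁅I, J⁆ → (x : Matrix (Fin n) (Fin n) ℂ) ∈ lowN n W f := by
  intro x hx
  have hx' : x ∈ Submodule.span ℂ {m : ↥L | ∃ a ∈ I, ∃ b ∈ J, ⁅a, b⁆ = m} := by
    rw [← LieSubmodule.lieIdeal_oper_eq_linear_span']
    exact hx
  refine Submodule.span_induction (R := ℂ) (M := ↥L)
    (s := {m : ↥L | ∃ a ∈ I, ∃ b ∈ J, ⁅a, b⁆ = m})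
    (p := fun m _ => (m : Matrix (Fin n) (Fin n) ℂ) ∈ lowN n W f) ?_ ?_ ?_ ?_ hx'
  · rintro m ⟨a, ha, b, hb, rfl⟩
    have hcoe : ((⁅a, b⁆ : ↥L) : Matrix (Fin n) (Fin n) ℂ)
        = (a : Matrix (Fin n) (Fin n) ℂ) * b - (b : Matrix (Fin n) (Fin n) ℂ) * a := by
      rw [LieSubalgebra.coe_bracket, Ring.lie_def]
    rw [hcoe]
    exact hf _ _ (hI a ha) (hJ b hb)
  · simp only [ZeroMemClass.coe_zero]
    exact (lowN n W f).zero_mem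
  · intro y z _ _ hy hz
    exact (lowN n W f).add_mem hy hz
  · intro c y _ hy
    exact (lowN n W f).smul_mem c hy

/-- For odd `n ≥ 5`, the Lie algebra
`sol_{A_n²} = {X | Xᵀ A_n² + A_n² X = 0}` is solvable. -/
theorem stmt_17 (n : ℕ) (hn : 5 ≤ n) (hodd : Odd n) :
    LieAlgebra.IsSolvable ↥(solAlg n (shiftMat n ^ 2)) := by
  have ho : n % 2 = 1 := Nat.odd_iff.mp hodd
  set L := solAlg n (shiftMat n ^ 2) with hL
  set W : Fin n → ℕ := fun i => wt n (i : ℕ) with hW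
  have hWinj : Function.Injective W := by
    intro a b h
    exact Fin.ext (wt_inj n a.is_lt b.is_lt h)
  -- every element of the Lie algebra is `W`-triangular
  have hsol : ∀ x : ↥L, (x : Matrix (Fin n) (Fin n) ℂ) ∈ lowN n W 0 := by
    intro x i j hij
    have hx : (x : Matrix (Fin n) (Fin n) ℂ)ᵀ * (shiftMat n ^ 2)
        + (shiftMat n ^ 2) * (x : Matrix (Fin n) (Fin n) ℂ) = 0 := x.2
    have hij' : wt n (j : ℕ) < wt n (i : ℕ) := by simpa [hW] using hij
    rcases coverage hn ho i.is_lt j.is_lt hij' with hB | hT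
    · have hz := zeroB hx ((i : ℕ) + (j : ℕ)) i j le_rfl hB
      rwa [xe_eq] at hz
    · have hz := zeroT hx (2 * n) i j (by omega) i.is_lt j.is_lt hT
      rwa [xe_eq] at hz
  -- the derived series is controlled by the filtration `lowN`
  have key : ∀ k, ∀ x : ↥L, x ∈ LieAlgebra.derivedSeries ℂ ↥L (k + 1) →
      (x : Matrix (Fin n) (Fin n) ℂ) ∈ lowN n W (2 ^ k) := by
    intro k
    induction k with
    | zero =>
      have : LieAlgebra.derivedSeries ℂ ↥L 1
          = ⁅(⊤ : LieIdeal ℂ ↥L), (⊤ : LieIdeal ℂ ↥L)⁆ := rfl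
      rw [this]
      refine derived_bracket_bound _ _ (fun x _ => hsol x) (fun x _ => hsol x) ?_
      intro X Y hX hY
      exact comm_mem_lowN hWinj hX hY
    | succ k ih =>
      rw [LieAlgebra.derivedSeries_def, LieAlgebra.derivedSeriesOfIdeal_succ]
      rw [← LieAlgebra.derivedSeries_def]
      refine derived_bracket_bound _ _ ih ih ?_
      intro X Y hX hY
      have h1 := mul_mem_lowN hX hY
      have h2 := mul_mem_lowN hY hX
      have : (2 : ℕ) ^ k + 2 ^ k = 2 ^ (k + 1) := by ring
      rw [this] at h1 h2
      exact (lowN n W (2 ^ (k + 1))).sub_mem h1 h2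
  refine LieAlgebra.IsSolvable.mk (R := ℂ) (k := 7 * n + 1) ?_
  rw [LieSubmodule.eq_bot_iff]
  intro x hx
  have hx' := key (7 * n) x hx
  have hzero : (x : Matrix (Fin n) (Fin n) ℂ) = 0 := by
    ext i j
    apply hx' i j
    have h1 : W j < 7 * n := wt_lt n j j.is_lt
    have h2 : 7 * n < 2 ^ (7 * n) := Nat.lt_two_pow_self
    omega
  exact Subtype.ext hzero
end
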